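/- Let G be a graph with a c-deletion set D' of size at most k, and let D be any subset of D_G^{k+c} (the vertices of degree at least k+c). Then every connected component of G \ D either has at most c vertices or has a c-deletion set of size at most k − |D|, and at most k − |D| components of G \ D have more than c vertices. -/

import Mathlib

/-- Reachability within the vertex subset `S` using the adjacency relation `R`. -/
def RelReachIn {W : Type*} (R : W → W → Prop) (S : Set W) : W → W → Prop :=
  Relation.ReflTransGen (fun x y => x ∈ S ∧ y ∈ S ∧ R x y)

/-- The connected component, inside the induced subgraph on `S`, containing `a`. -/
def RelCompIn {W : Type*} (R : W → W → Prop) (S : Set W) (a : W) : Set W :=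
  {b | b ∈ S ∧ RelReachIn R S a b}

section Aux

variable {W : Type*}

lemma relReachIn_symm {R : W → W → Prop} (hR : Symmetric R) (S : Set W) :
    Symmetric (RelReachIn R S) :=
  by
    haveI : Std.Symm (fun x y : W => x ∈ S ∧ y ∈ S ∧ R x y) := ⟨fun x y h => ⟨h.2.1, h.1, hR h.2.2⟩⟩
    exact fun x y h => (Relation.ReflTransGen.stdSymm (r := fun x y : W => x ∈ S ∧ y ∈ S ∧ R x y)).symm x y h

lemma relCompIn_subset (R : W → W → Prop) (S : Set W) (a : W) :
    RelCompIn R S a ⊆ S := fun _ hb => hb.1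

lemma mem_relCompIn_self {R : W → W → Prop} {S : Set W} {a : W} (ha : a ∈ S) :
    a ∈ RelCompIn R S a := ⟨ha, Relation.ReflTransGen.refl⟩

lemma relCompIn_eq_of_mem {R : W → W → Prop} (hR : Symmetric R) {S : Set W} {a b : W}
    (hb : b ∈ RelCompIn R S a) : RelCompIn R S a = RelCompIn R S b := by
  ext x
  constructor
  · rintro ⟨hx, hr⟩; exact ⟨hx, (relReachIn_symm hR S hb.2).trans hr⟩
  · rintro ⟨hx, hr⟩; exact ⟨hx, hb.2.trans hr⟩

lemma relCompIn_mono {R : W → W → Prop} {S T : Set W} (hST : S ⊆ T) (a : W) :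
    RelCompIn R S a ⊆ RelCompIn R T a := fun b hb =>
  ⟨hST hb.1, Relation.ReflTransGen.mono (r := fun x y => x ∈ S ∧ y ∈ S ∧ R x y)
    (p := fun x y => x ∈ T ∧ y ∈ T ∧ R x y) (fun x y h => ⟨hST h.1, hST h.2.1, h.2.2⟩) a b hb.2⟩

/-- If the component of `a` in `S` is contained in `T`, then it is contained in the
component of `a` in `T`. -/
lemma relCompIn_subset_relCompIn_of_subset {R : W → W → Prop} {S T : Set W} {a : W}
    (h : RelCompIn R S a ⊆ T) : RelCompIn R S a ⊆ RelCompIn R T a := by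
  rintro b ⟨hbS, hr⟩
  refine ⟨h ⟨hbS, hr⟩, ?_⟩
  clear hbS
  induction hr with
  | refl => exact Relation.ReflTransGen.refl
  | @tail x y hax step ih =>
    have hxC : x ∈ RelCompIn R S a := ⟨step.1, hax⟩
    have hyC : y ∈ RelCompIn R S a := ⟨step.2.1, hax.tail step⟩
    exact ih.tail ⟨h hxC, h hyC, step.2.2⟩

end Aux

theorem subset_of_high_degree_is_extended_deletion_set {V : Type*} [Fintype V]
    (G : SimpleGraph V) [DecidableRel G.Adj] (c k : ℕ) (hc : 1 ≤ c)
    (D' : Set V) (hD'card : D'.ncard ≤ k)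
    (hD'del : ∀ a ∉ D', (RelCompIn G.Adj D'ᶜ a).ncard ≤ c)
    (D : Set V) (hD : D ⊆ {v : V | k + c ≤ G.degree v}) :
    (∀ a ∉ D, (RelCompIn G.Adj Dᶜ a).ncard ≤ c ∨
        ∃ S ⊆ RelCompIn G.Adj Dᶜ a, S.ncard ≤ k - D.ncard ∧
          ∀ b ∈ RelCompIn G.Adj Dᶜ a \ S,
            (RelCompIn G.Adj (RelCompIn G.Adj Dᶜ a \ S) b).ncard ≤ c) ∧
    {C : Set V | (∃ a ∉ D, C = RelCompIn G.Adj Dᶜ a) ∧ c < C.ncard}.ncard ≤ k - D.ncard := by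
  classical
  -- Step 1: D ⊆ D'
  have hDD' : D ⊆ D' := by
    intro v hv
    by_contra hv'
    have hvdeg : k + c ≤ G.degree v := hD hv
    set N : Set V := G.neighborSet v with hN
    have hNcard : N.ncard = G.degree v := by
      rw [Set.ncard_eq_toFinset_card', Set.toFinset_card,
        SimpleGraph.card_neighborSet_eq_degree]
    -- the component of v in D'ᶜ contains v and all neighbors outside D'
    have hsub : insert v (N \ D') ⊆ RelCompIn G.Adj D'ᶜ v := by
      rintro x (rfl | ⟨hxN, hxD'⟩)
      · exact mem_relCompIn_self hv'
      · exact ⟨hxD', Relation.ReflTransGen.single ⟨hv', hxD', hxN⟩⟩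
    have hvN : v ∉ N \ D' := fun h => (G.irrefl (h.1 : G.Adj v v))
    have h1 : (insert v (N \ D')).ncard = (N \ D').ncard + 1 :=
      Set.ncard_insert_of_notMem hvN (Set.toFinite _)
    have h2 : N.ncard ≤ (N \ D').ncard + D'.ncard := by
      calc N.ncard ≤ ((N \ D') ∪ D').ncard :=
            Set.ncard_le_ncard (fun x hx => by
              by_cases hxD' : x ∈ D'
              · exact Or.inr hxD'
              · exact Or.inl ⟨hx, hxD'⟩) (Set.toFinite _)
        _ ≤ (N \ D').ncard + D'.ncard := Set.ncard_union_le _ _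
    have h3 : (insert v (N \ D')).ncard ≤ (RelCompIn G.Adj D'ᶜ v).ncard :=
      Set.ncard_le_ncard hsub (Set.toFinite _)
    have h4 := hD'del v hv'
    omega
  have hdiffcard : (D' \ D).ncard ≤ k - D.ncard := by
    rw [Set.ncard_diff hDD']
    exact Nat.sub_le_sub_right hD'card _
  constructor
  · -- Part 1
    intro a ha
    right
    refine ⟨RelCompIn G.Adj Dᶜ a ∩ D', fun x hx => hx.1, ?_, ?_⟩
    · calc (RelCompIn G.Adj Dᶜ a ∩ D').ncard ≤ (D' \ D).ncard := by
            refine Set.ncard_le_ncard (fun x hx => ⟨hx.2, ?_⟩) (Set.toFinite _)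
            exact (relCompIn_subset _ _ _ hx.1 : x ∈ Dᶜ)
        _ ≤ k - D.ncard := hdiffcard
    · intro b hb
      have hsub : RelCompIn G.Adj Dᶜ a \ (RelCompIn G.Adj Dᶜ a ∩ D') ⊆ D'ᶜ := by
        rintro x ⟨hx1, hx2⟩ hxD'
        exact hx2 ⟨hx1, hxD'⟩
      have hbD' : b ∉ D' := hsub hb
      calc (RelCompIn G.Adj (RelCompIn G.Adj Dᶜ a \ (RelCompIn G.Adj Dᶜ a ∩ D')) b).ncard
          ≤ (RelCompIn G.Adj D'ᶜ b).ncard :=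
            Set.ncard_le_ncard (relCompIn_mono hsub b) (Set.toFinite _)
        _ ≤ c := hD'del b hbD'
  · -- Part 2
    set BigC := {C : Set V | (∃ a ∉ D, C = RelCompIn G.Adj Dᶜ a) ∧ c < C.ncard} with hBigC
    -- every big component contains a vertex of D' \ D
    have hhit : ∀ C ∈ BigC, (C ∩ (D' \ D)).Nonempty := by
      rintro C ⟨⟨a, haD, rfl⟩, hbig⟩
      by_contra hempty
      rw [Set.not_nonempty_iff_eq_empty] at hempty
      have haD' : a ∉ D' := by
        intro haD'
        have : a ∈ RelCompIn G.Adj Dᶜ a ∩ (D' \ D) :=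
          ⟨mem_relCompIn_self haD, haD', haD⟩
        rw [hempty] at this
        exact this
      have hsub : RelCompIn G.Adj Dᶜ a ⊆ D'ᶜ := by
        intro x hx hxD'
        have : x ∈ RelCompIn G.Adj Dᶜ a ∩ (D' \ D) := ⟨hx, hxD', hx.1⟩
        rw [hempty] at this
        exact this
      have := Set.ncard_le_ncard (relCompIn_subset_relCompIn_of_subset hsub) (Set.toFinite _)
      have := hD'del a haD'
      omega
    rcases Set.eq_empty_or_nonempty BigC with hB | hB
    · simp [hB]
    · obtain ⟨C0, hC0⟩ := hB
      obtain ⟨x0, hx0⟩ := hhit C0 hC0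
      haveI : Nonempty V := ⟨x0⟩
      set f : Set V → V := fun C =>
        if h : (C ∩ (D' \ D)).Nonempty then h.some else Classical.arbitrary V with hf
      have hfmem : ∀ C ∈ BigC, f C ∈ C ∩ (D' \ D) := by
        intro C hC
        have h := hhit C hC
        simp only [hf, dif_pos h]
        exact h.some_mem
      have hinj : Set.InjOn f BigC := by
        intro C1 hC1 C2 hC2 heq
        have h1 := hfmem _ hC1
        have h2 := hfmem _ hC2
        obtain ⟨⟨a1, _, rfl⟩, _⟩ := hC1
        obtain ⟨⟨a2, _, rfl⟩, _⟩ := hC2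
        rw [heq] at h1
        exact (relCompIn_eq_of_mem (fun _ _ h => G.adj_symm h) h1.1).trans
          (relCompIn_eq_of_mem (fun _ _ h => G.adj_symm h) h2.1).symm
      calc BigC.ncard ≤ (D' \ D).ncard :=
            Set.ncard_le_ncard_of_injOn f (fun C hC => (hfmem C hC).2) hinj (Set.toFinite _)
        _ ≤ k - D.ncard := hdiffcard
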